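/- Let $V$ be a finite-dimensional real vector space, $\Theta \in \Lambda^n V^*$ with $n > 1$, and let $K = \ker_1 d\Theta$ be replaced abstractly by a subspace $K \subseteq V$ satisfying $\iota_{R\wedge R'}\Theta = 0$ for all $R, R' \in K$ (the variational condition). Define $\mathcal{H} = \{h \in \Lambda^n V^* : \iota_v h \in \{\iota_R\Theta : R \in K\} \text{ for all } v \in V\}$. Then for every $h \in \mathcal{H}$ and every $R \in K$, $\iota_R h = 0$. -/

import Mathlib

/-!
STATEMENT 14 (pointwise version of Proposition 5.7).

`Θ ∈ ΛⁿV*` with `n > 1` (degree `n+2` here), `K ⊆ V` a subspace satisfying the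
variational condition `ι_{R∧R'}Θ = 0` for all `R, R' ∈ K`.  The Hamiltonian
subspace is `ℋ = {h ∈ ΛⁿV* : ∀ v, ι_v h ∈ {ι_R Θ : R ∈ K}}`.  Then every
`h ∈ ℋ` satisfies `ι_R h = 0` for all `R ∈ K`.
-/
theorem stmt14
    (V : Type*) [AddCommGroup V] [Module ℝ V] [FiniteDimensional ℝ V] (n : ℕ)
    (Θ : V [⋀^Fin (n + 2)]→ₗ[ℝ] ℝ) (K : Submodule ℝ V)
    (hvar : ∀ R ∈ K, ∀ R' ∈ K, (Θ.curryLeft R).curryLeft R' = 0)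
    (h : V [⋀^Fin (n + 2)]→ₗ[ℝ] ℝ)
    (hH : ∀ v : V, ∃ R ∈ K, h.curryLeft v = Θ.curryLeft R) :
    ∀ R ∈ K, h.curryLeft R = 0 := by
  intro R hR
  ext m
  set v := m 0 with hv
  set rest := Fin.tail m with hrest
  have hm : m = Fin.cons v rest := (Fin.cons_self_tail m).symm
  obtain ⟨R', hR', hRθ⟩ := hH v
  have hswap : (Fin.cons R m : Fin (n + 2) → V) =
      (Fin.cons v (Fin.cons R rest) : Fin (n + 2) → V) ∘ Equiv.swap (0 : Fin (n + 2)) 1 := by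
    rw [hm]
    funext i
    refine Fin.cases ?_ (fun j => Fin.cases ?_ (fun k => ?_) j) i <;>
      simp [Equiv.swap_apply_of_ne_of_ne, Fin.ext_iff]
  have h1 : h.curryLeft R m = h (Fin.cons R m) := rfl
  rw [h1, hswap, AlternatingMap.map_swap _ _ (Fin.ne_of_lt (by simp [Fin.lt_iff_val_lt_val]))]
  have h2 : h (Fin.cons v (Fin.cons R rest)) = ((Θ.curryLeft R').curryLeft R) rest := by
    have := congrArg (fun f => f (Fin.cons R rest)) hRθ
    exact this
  simp [h2, hvar R' hR' R hR]
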